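/- Let P, Q be polynomials over ℂ in l variables with coefficients in a subfield K of ℂ, and suppose r₁, ..., r_{l-1} are complex numbers algebraically independent over K. If the variable z₀ is free in the rational function P/Q (i.e., P/Q is not equal to any rational function of z₁,...,z_{l-1} only), then the one-variable rational function z ↦ P(z, r₁, ..., r_{l-1}) / Q(z, r₁, ..., r_{l-1}) is not constant. -/

import Mathlib

open MvPolynomial

set_option synthInstance.maxHeartbeats 400000 in

/-- A polynomial with coefficients in `K` that vanishes at an algebraically
independent family is zero. -/
lemma key_vanish {l : ℕ} {K : Subfield ℂ} {r : Fin l → ℂ}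
    (hr : AlgebraicIndependent K r) (s : MvPolynomial (Fin l) ℂ)
    (hs : ∀ m, s.coeff m ∈ K) (h : MvPolynomial.eval r s = 0) : s = 0 := by
  set s' : MvPolynomial (Fin l) K :=
    ∑ m ∈ s.support, monomial m (⟨s.coeff m, hs m⟩ : K) with hs'
  have hmap : MvPolynomial.map (algebraMap K ℂ) s' = s := by
    rw [hs', map_sum]
    simp only [map_monomial]
    conv_rhs => rw [s.as_sum]
    rfl
  have haeval : MvPolynomial.aeval r s' = 0 := by
    rw [aeval_def, eval₂_eq_eval_map, hmap, h]
  have : s' = 0 := hr (by simpa using haeval)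
  rw [← hmap, this, map_zero]

lemma coeffK_mul {l : ℕ} {K : Subfield ℂ} {a b : MvPolynomial (Fin l) ℂ}
    (ha : ∀ m, a.coeff m ∈ K) (hb : ∀ m, b.coeff m ∈ K) :
    ∀ m, (a * b).coeff m ∈ K := by
  intro m
  rw [coeff_mul]
  exact Subfield.sum_mem K fun x _ => mul_mem (ha _) (hb _)

lemma finSuccEquiv_rename_succ {l : ℕ} (q : MvPolynomial (Fin l) ℂ) :
    finSuccEquiv ℂ l (rename Fin.succ q) = Polynomial.C q := by
  induction q using MvPolynomial.induction_on with
  | C a => simp [finSuccEquiv_apply]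
  | add p q hp hq => simp [hp, hq]
  | mul_X p i hp => simp [hp, finSuccEquiv_X_succ]

/-- If `z₀` is free in the rational function `P/Q` (with coefficients in a subfield
`K ⊆ ℂ`) and `r₁,…,r_{l}` are algebraically independent over `K`, then
`z ↦ P(z, r)/Q(z, r)` is not constant. -/
theorem stmt3 (l : ℕ) (K : Subfield ℂ)
    (P Q : MvPolynomial (Fin (l + 1)) ℂ)
    (hP : ∀ m, P.coeff m ∈ K) (hQc : ∀ m, Q.coeff m ∈ K) (hQ0 : Q ≠ 0)
    (r : Fin l → ℂ) (hr : AlgebraicIndependent K r)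
    (hfree : ¬∃ P' Q' : MvPolynomial (Fin l) ℂ,
      (∀ m, P'.coeff m ∈ K) ∧ (∀ m, Q'.coeff m ∈ K) ∧ Q' ≠ 0 ∧
      P * MvPolynomial.rename Fin.succ Q' = Q * MvPolynomial.rename Fin.succ P') :
    ¬∃ c : ℂ, ∀ z : ℂ, MvPolynomial.eval (Fin.cons z r) Q ≠ 0 →
      MvPolynomial.eval (Fin.cons z r) P / MvPolynomial.eval (Fin.cons z r) Q = c := by
  rintro ⟨c, hc⟩
  set f : Polynomial (MvPolynomial (Fin l) ℂ) := finSuccEquiv ℂ l P with hf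
  set g : Polynomial (MvPolynomial (Fin l) ℂ) := finSuccEquiv ℂ l Q with hg
  -- coefficients of f, g have coefficients in K
  have hfK : ∀ k m, ((f.coeff k).coeff m : ℂ) ∈ K := fun k m => by
    rw [hf, finSuccEquiv_coeff_coeff]; exact hP _
  have hgK : ∀ k m, ((g.coeff k).coeff m : ℂ) ∈ K := fun k m => by
    rw [hg, finSuccEquiv_coeff_coeff]; exact hQc _
  set p : Polynomial ℂ := f.map (MvPolynomial.eval r) with hp
  set q : Polynomial ℂ := g.map (MvPolynomial.eval r) with hq
  have hevP : ∀ z, MvPolynomial.eval (Fin.cons z r) P = p.eval z := fun z =>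
    eval_eq_eval_mv_eval' r z P
  have hevQ : ∀ z, MvPolynomial.eval (Fin.cons z r) Q = q.eval z := fun z =>
    eval_eq_eval_mv_eval' r z Q
  -- g ≠ 0
  have hg0 : g ≠ 0 := by
    simp only [hg, ne_eq, EmbeddingLike.map_eq_zero_iff]
    exact hQ0
  set k₀ := g.natDegree with hk₀
  set Q' := g.coeff k₀ with hQ'
  set P' := f.coeff k₀ with hP'
  have hQ'0 : Q' ≠ 0 := Polynomial.leadingCoeff_ne_zero.mpr hg0
  have hQ'r : MvPolynomial.eval r Q' ≠ 0 := fun h =>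
    hQ'0 (key_vanish hr Q' (hgK k₀) h)
  have hq0 : q ≠ 0 := by
    intro h
    apply hQ'r
    have := congrArg (fun t => Polynomial.coeff t k₀) h
    simpa [hq, Polynomial.coeff_map] using this
  -- p = C c * q
  have hpq : p = Polynomial.C c * q := by
    have hsub : ({z : ℂ | (p - Polynomial.C c * q).IsRoot z}).Infinite := by
      apply Set.Infinite.mono (s := {z : ℂ | ¬ q.IsRoot z})
      · intro z hz
        have hqz : q.eval z ≠ 0 := hz
        have := hc z (by rw [hevQ]; exact hqz)
        rw [hevP, hevQ, div_eq_iff hqz] at this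
        simp [Polynomial.IsRoot, this]
      · have hfin : ({z : ℂ | q.IsRoot z}).Finite := Polynomial.finite_setOf_isRoot hq0
        simpa [Set.compl_setOf] using hfin.infinite_compl
    exact sub_eq_zero.mp (Polynomial.eq_zero_of_infinite_isRoot _ hsub)
  -- coefficientwise: eval r (f.coeff k) = c * eval r (g.coeff k)
  have hcoeff : ∀ k, MvPolynomial.eval r (f.coeff k) = c * MvPolynomial.eval r (g.coeff k) := by
    intro k
    have := congrArg (fun t => Polynomial.coeff t k) hpq
    simpa [hp, hq, Polynomial.coeff_map, Polynomial.coeff_C_mul] using this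
  -- cross relation as polynomials
  have hcross : ∀ k, f.coeff k * Q' = g.coeff k * P' := by
    intro k
    have hz : MvPolynomial.eval r (f.coeff k * Q' - g.coeff k * P') = 0 := by
      simp only [map_sub, map_mul, hcoeff k, hcoeff k₀, ← hQ', ← hP']
      rw [hP', hcoeff k₀, ← hQ']
      ring
    have hK : ∀ m, (f.coeff k * Q' - g.coeff k * P').coeff m ∈ K := by
      intro m
      rw [MvPolynomial.coeff_sub]
      exact sub_mem (coeffK_mul (hfK k) (hgK k₀) m) (coeffK_mul (hgK k) (hfK k₀) m)
    have := key_vanish hr _ hK hz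
    exact sub_eq_zero.mp this
  apply hfree
  refine ⟨P', Q', hfK k₀, hgK k₀, hQ'0, ?_⟩
  apply (finSuccEquiv ℂ l).injective
  rw [map_mul, map_mul, finSuccEquiv_rename_succ, finSuccEquiv_rename_succ, ← hf, ← hg]
  refine Polynomial.ext fun k => ?_
  rw [Polynomial.coeff_mul_C, Polynomial.coeff_mul_C]
  exact hcross k
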